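/- arXiv:0912.0179 — 4 statements merged into one kernel-verified Lean document; each statement's English description precedes it below -/
import Mathlib

section
/- Let p, p', q, q' be real numbers with p ≤ p' ≤ q ≤ q' (so the intervals [p, q] and [p', q'] cross). Then the nested matching is at most as expensive as the crossing matching: c(p, q') + c(p', q) ≤ c(p, q) + c(p', q'), i.e. g(q' − p) + g(q − p') ≤ g(q − p) + g(q' − p'). -/
theorem stmt_4
    (g : ℝ → ℝ)
    (hg : ConcaveOn ℝ Set.univ g)
    (hgmono : MonotoneOn g (Set.Ici 0))
    (c : ℝ → ℝ → ℝ)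
    (hc : ∀ x y, c x y = g |x - y|)
    (a b x y : ℝ) (h1 : a ≤ b) (h2 : b ≤ x) (h3 : x ≤ y)
    : c a y + c b x ≤ c a x + c b y := by
  simp only [hc]
  rw [abs_of_nonpos (by linarith : a - y ≤ 0), abs_of_nonpos (by linarith : b - x ≤ 0),
    abs_of_nonpos (by linarith : a - x ≤ 0), abs_of_nonpos (by linarith : b - y ≤ 0)]
  simp only [neg_sub]
  set s := x - b with hs
  set u := y - a with hu
  set t := x - a with ht
  set t' := y - b with ht'
  have hsu : s ≤ u := by simp only [hs, hu]; linarith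
  rcases eq_or_lt_of_le hsu with heq | hlt
  · have h4 : x - b = y - a := heq
    have e1 : t = s := by simp only [ht, hs]; linarith
    have e2 : t' = s := by simp only [ht', hs]; linarith
    have e3 : u = s := heq.symm
    rw [e1, e2, e3]
  · set l := (u - t) / (u - s) with hl
    have hus : (0:ℝ) < u - s := by linarith
    have hl0 : 0 ≤ l := by
      apply div_nonneg _ (le_of_lt hus)
      simp only [hu, ht]; linarith
    have hl1 : l ≤ 1 := by
      rw [hl, div_le_one hus]
      simp only [hu, ht, hs]; linarith
    have h1l : (0:ℝ) ≤ 1 - l := by linarith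
    have hteq : t = l * s + (1 - l) * u := by
      rw [hl]
      field_simp
      ring
    have ht'eq : t' = (1 - l) * s + l * u := by
      have hsum : t + t' = s + u := by simp only [ht, ht', hs, hu]; ring
      have : t' = s + u - t := by linarith
      rw [this, hteq]; ring
    have c1 := hg.2 (Set.mem_univ s) (Set.mem_univ u) hl0 h1l (by ring)
    have c2 := hg.2 (Set.mem_univ s) (Set.mem_univ u) h1l hl0 (by ring)
    simp only [smul_eq_mul] at c1 c2
    rw [← hteq] at c1
    rw [← ht'eq] at c2
    linarith
end

section
/- There exists an optimal permutation σ* (i.e., C(σ*) ≤ C(σ) for every permutation σ of {1, ..., N_0}) satisfying the non-crossing rule: for all indices i ≠ i' such that p_i ≤ q_{σ*(i)} and p_{i'} ≤ q_{σ*(i')}, either the closed intervals [p_i, q_{σ*(i)}] and [p_{i'}, q_{σ*(i')}] are disjoint, or one of them is contained in the other. -/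
private lemma sum_pair_diff {n : Type*} [Fintype n] [DecidableEq n]
    (F G : n → ℝ) (x x' : n) (hxx : x ≠ x')
    (heq : ∀ y, y ≠ x → y ≠ x' → F y = G y) :
    (∑ y, F y) - (∑ y, G y) = (F x + F x') - (G x + G x') := by
  classical
  have hx : x ∈ (Finset.univ : Finset n) := Finset.mem_univ x
  have hx' : x' ∈ (Finset.univ : Finset n).erase x := by
    simp [Finset.mem_erase, hxx.symm]
  rw [← Finset.add_sum_erase _ F hx, ← Finset.add_sum_erase _ F hx',
      ← Finset.add_sum_erase _ G hx, ← Finset.add_sum_erase _ G hx']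
  have hcong : ∑ y ∈ ((Finset.univ : Finset n).erase x).erase x', F y
      = ∑ y ∈ ((Finset.univ : Finset n).erase x).erase x', G y := by
    apply Finset.sum_congr rfl
    intro y hy
    exact heq y (Finset.ne_of_mem_erase (Finset.mem_of_mem_erase hy))
      (Finset.ne_of_mem_erase hy)
  rw [hcong]; ring

private lemma concave_four {g : ℝ → ℝ} (hg : ConcaveOn ℝ Set.univ g)
    {u x y v : ℝ} (h1 : u ≤ x) (h2 : x ≤ v) (hs : u + v = x + y) :
    g u + g v ≤ g x + g y := by
  rcases eq_or_lt_of_le (h1.trans h2) with h | h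
  · have hux : u = x := le_antisymm h1 (h ▸ h2)
    have hyv : y = v := by linarith
    rw [← hux, hyv]
  · set t := (v - x) / (v - u) with ht
    have hvu : 0 < v - u := by linarith
    have htvu : t * (v - u) = v - x := by
      rw [ht]; field_simp
    have ht0 : 0 ≤ t := div_nonneg (by linarith) hvu.le
    have ht1 : 0 ≤ 1 - t := by
      have : t ≤ 1 := by
        rw [ht, div_le_one hvu]; linarith
      linarith
    have hx' : t * u + (1 - t) * v = x := by linear_combination -htvu
    have hy' : (1 - t) * u + t * v = y := by linear_combination htvu + hs
    have c1 := hg.2 (Set.mem_univ u) (Set.mem_univ v) ht0 ht1 (by ring)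
    have c2 := hg.2 (Set.mem_univ u) (Set.mem_univ v) ht1 ht0 (by ring)
    simp only [smul_eq_mul] at c1 c2
    rw [hx'] at c1
    rw [show (1 - t) * u + t * v = y from hy'] at c2
    nlinarith [c1, c2]

private lemma crossing_swap {n : Type*} [Fintype n] [DecidableEq n]
    (g : ℝ → ℝ) (hg : ConcaveOn ℝ Set.univ g)
    (P Q : n → ℝ) (e : Equiv.Perm n) (x x' : n) (hxx : x ≠ x')
    (h1 : P x < P x') (h2 : P x' ≤ Q (e x)) (h3 : Q (e x) < Q (e x')) :
    (∑ y, g |P y - Q (((Equiv.swap x x').trans e) y)|) ≤ (∑ y, g |P y - Q (e y)|) ∧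
    (∑ y, (Q (e y) - P y) ^ 2) < (∑ y, (Q (((Equiv.swap x x').trans e) y) - P y) ^ 2) := by
  classical
  set e' := (Equiv.swap x x').trans e with he'
  have hex : e' x = e x' := by simp [he', Equiv.swap_apply_left]
  have hex' : e' x' = e x := by simp [he', Equiv.swap_apply_right]
  have hother : ∀ y : n, y ≠ x → y ≠ x' → e' y = e y := by
    intro y hy hy'
    simp [he', Equiv.swap_apply_of_ne_of_ne hy hy']
  have habs : ∀ a b : ℝ, a ≤ b → |a - b| = b - a := by
    intro a b hab; rw [abs_sub_comm]; exact abs_of_nonneg (by linarith)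
  have hPxA : P x ≤ Q (e x) := le_trans h1.le h2
  have hPxA' : P x ≤ Q (e x') := le_trans hPxA h3.le
  have hPx'A' : P x' ≤ Q (e x') := le_trans h2 h3.le
  have key : g (Q (e x) - P x') + g (Q (e x') - P x)
      ≤ g (Q (e x) - P x) + g (Q (e x') - P x') := by
    apply concave_four hg (by linarith) (by linarith) (by ring)
  constructor
  · have d1 := sum_pair_diff (fun y => g |P y - Q (e' y)|) (fun y => g |P y - Q (e y)|)
      x x' hxx (fun y hy hy' => by simp only [hother y hy hy'])
    simp only [hex, hex'] at d1
    rw [habs _ _ hPxA', habs _ _ h2, habs _ _ hPxA, habs _ _ hPx'A'] at d1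
    linarith
  · have d2 := sum_pair_diff (fun y => (Q (e' y) - P y) ^ 2) (fun y => (Q (e y) - P y) ^ 2)
      x x' hxx (fun y hy hy' => by simp only [hother y hy hy'])
    simp only [hex, hex'] at d2
    nlinarith [mul_pos (sub_pos.2 h1) (sub_pos.2 h3)]

theorem stmt_5
    (N₀ : ℕ) (hN₀ : 1 ≤ N₀)
    (p q : ℕ → ℝ)
    (hdist : Set.InjOn p (Set.Icc 1 N₀) ∧ Set.InjOn q (Set.Icc 1 N₀) ∧
      ∀ i ∈ Set.Icc 1 N₀, ∀ j ∈ Set.Icc 1 N₀, p i ≠ q j)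
    (g : ℝ → ℝ)
    (hg : ConcaveOn ℝ Set.univ g)
    (hgmono : MonotoneOn g (Set.Ici 0))
    (c : ℝ → ℝ → ℝ)
    (hc : ∀ x y, c x y = g |x - y|)
    (C : (ℕ → ℕ) → ℝ)
    (hC : ∀ σ : ℕ → ℕ, C σ = ∑ i ∈ Finset.Icc 1 N₀, c (p i) (q (σ i)))
    : ∃ σ : ℕ → ℕ, Set.BijOn σ (Set.Icc 1 N₀) (Set.Icc 1 N₀) ∧
      (∀ τ : ℕ → ℕ, Set.BijOn τ (Set.Icc 1 N₀) (Set.Icc 1 N₀) → C σ ≤ C τ) ∧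
      (∀ i ∈ Set.Icc 1 N₀, ∀ i' ∈ Set.Icc 1 N₀, i ≠ i' →
        p i ≤ q (σ i) → p i' ≤ q (σ i') →
        Disjoint (Set.Icc (p i) (q (σ i))) (Set.Icc (p i') (q (σ i'))) ∨
        Set.Icc (p i) (q (σ i)) ⊆ Set.Icc (p i') (q (σ i')) ∨
        Set.Icc (p i') (q (σ i')) ⊆ Set.Icc (p i) (q (σ i))) := by
  classical
  set s : Finset ℕ := Finset.Icc 1 N₀ with hs
  have hset : (Set.Icc 1 N₀ : Set ℕ) = ↑s := by rw [hs, Finset.coe_Icc]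
  let n := {i // i ∈ s}
  let P : n → ℝ := fun x => p ↑x
  let Q : n → ℝ := fun x => q ↑x
  let f : Equiv.Perm n → ℝ := fun e => ∑ y, g |P y - Q (e y)|
  let D : Equiv.Perm n → ℝ := fun e => ∑ y, (Q (e y) - P y) ^ 2
  have hne : (Finset.univ : Finset (Equiv.Perm n)).Nonempty := ⟨1, Finset.mem_univ 1⟩
  obtain ⟨e₀, -, he₀⟩ := Finset.exists_min_image Finset.univ f hne
  set T : Finset (Equiv.Perm n) := Finset.univ.filter (fun e => ∀ e', f e ≤ f e') with hT
  have hTne : T.Nonempty := by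
    refine ⟨e₀, ?_⟩
    rw [hT, Finset.mem_filter]
    exact ⟨Finset.mem_univ _, fun e' => he₀ e' (Finset.mem_univ e')⟩
  obtain ⟨e, heT, hemax⟩ := Finset.exists_max_image T D hTne
  have hemin : ∀ e', f e ≤ f e' := by
    have := (Finset.mem_filter.mp (hT ▸ heT)).2
    exact this
  let σ : ℕ → ℕ := fun i => if h : i ∈ s then ↑(e ⟨i, h⟩) else i
  have hσ : ∀ i (h : i ∈ s), σ i = ↑(e ⟨i, h⟩) := fun i h => dif_pos h
  have hCσ : C σ = f e := by
    rw [hC, ← Finset.sum_coe_sort s (fun i => c (p i) (q (σ i)))]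
    apply Finset.sum_congr rfl
    intro y _
    rw [hσ _ y.2, hc]
  refine ⟨σ, ?_, ?_, ?_⟩
  · rw [hset]
    refine ⟨?_, ?_, ?_⟩
    · intro i hi
      have hi' : i ∈ s := Finset.mem_coe.mp hi
      change (↑s : Set ℕ) (σ i)  -- membership in coe
      have : σ i = ↑(e ⟨i, hi'⟩) := hσ i hi'
      rw [this]
      exact Finset.mem_coe.mpr (e ⟨i, hi'⟩).2
    · intro a ha b hb hab
      have ha' : a ∈ s := Finset.mem_coe.mp ha
      have hb' : b ∈ s := Finset.mem_coe.mp hb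
      rw [hσ a ha', hσ b hb'] at hab
      have := e.injective (Subtype.coe_injective hab)
      exact congrArg Subtype.val this
    · intro j hj
      have hj' : j ∈ s := Finset.mem_coe.mp hj
      refine ⟨↑(e.symm ⟨j, hj'⟩), Finset.mem_coe.mpr (e.symm ⟨j, hj'⟩).2, ?_⟩
      rw [hσ _ (e.symm ⟨j, hj'⟩).2]
      simp
  · intro τ hτ
    rw [hset] at hτ
    have hmap : ∀ x : n, τ ↑x ∈ s := fun x => Finset.mem_coe.mp (hτ.1 (Finset.mem_coe.mpr x.2))
    have hinj : Function.Injective (fun x : n => (⟨τ ↑x, hmap x⟩ : n)) := by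
      intro a b hab
      have h2 : τ ↑a = τ ↑b := congrArg Subtype.val hab
      have := hτ.2.1 (Finset.mem_coe.mpr a.2) (Finset.mem_coe.mpr b.2) h2
      exact Subtype.ext this
    have hbij : Function.Bijective (fun x : n => (⟨τ ↑x, hmap x⟩ : n)) :=
      Finite.injective_iff_bijective.mp hinj
    let eτ : Equiv.Perm n := Equiv.ofBijective _ hbij
    have hCτ : C τ = f eτ := by
      rw [hC, ← Finset.sum_coe_sort s (fun i => c (p i) (q (τ i)))]
      apply Finset.sum_congr rfl
      intro y _
      rw [hc]
      rfl
    rw [hCσ, hCτ]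
    exact hemin eτ
  · intro i hi i' hi' hne' hpi hpi'
    have hi_s : i ∈ s := by rwa [hset, Finset.mem_coe] at hi
    have hi'_s : i' ∈ s := by rwa [hset, Finset.mem_coe] at hi'
    by_contra hcon
    push_neg at hcon
    obtain ⟨hnd, hns1, hns2⟩ := hcon
    obtain ⟨z, hz1, hz2⟩ := Set.not_disjoint_iff.mp hnd
    rw [Set.mem_Icc] at hz1 hz2
    rw [Set.Icc_subset_Icc_iff hpi] at hns1
    rw [Set.Icc_subset_Icc_iff hpi'] at hns2
    push_neg at hns1 hns2
    have hpp : p i ≠ p i' := fun hpe => hne' (hdist.1 hi hi' hpe)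
    have hxx : (⟨i, hi_s⟩ : n) ≠ ⟨i', hi'_s⟩ := fun h => hne' (congrArg Subtype.val h)
    have hQi : q (σ i) = Q (e ⟨i, hi_s⟩) := by rw [hσ i hi_s]
    have hQi' : q (σ i') = Q (e ⟨i', hi'_s⟩) := by rw [hσ i' hi'_s]
    rcases lt_or_gt_of_ne hpp with hlt | hgt
    · have hAA : q (σ i) < q (σ i') := hns2 hlt.le
      have hov : p i' ≤ q (σ i) := le_trans hz2.1 hz1.2
      obtain ⟨hle, hltD⟩ := crossing_swap g hg P Q e ⟨i, hi_s⟩ ⟨i', hi'_s⟩ hxx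
        (by simpa [P] using hlt) (by rw [← hQi]; exact hov)
        (by rw [← hQi, ← hQi']; exact hAA)
      set e' := (Equiv.swap (⟨i, hi_s⟩ : n) ⟨i', hi'_s⟩).trans e with he'
      have he'T : e' ∈ T := by
        rw [hT, Finset.mem_filter]
        exact ⟨Finset.mem_univ _, fun e'' => le_trans hle (hemin e'')⟩
      have := hemax e' he'T
      have hDlt : D e < D e' := hltD
      simp only [D] at this hDlt
      linarith
    · have hAA : q (σ i') < q (σ i) := hns1 hgt.le
      have hov : p i ≤ q (σ i') := le_trans hz1.1 hz2.2
      obtain ⟨hle, hltD⟩ := crossing_swap g hg P Q e ⟨i', hi'_s⟩ ⟨i, hi_s⟩ hxx.symm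
        (by simpa [P] using hgt) (by rw [← hQi']; exact hov)
        (by rw [← hQi, ← hQi']; exact hAA)
      set e' := (Equiv.swap (⟨i', hi'_s⟩ : n) ⟨i, hi_s⟩).trans e with he'
      have he'T : e' ∈ T := by
        rw [hT, Finset.mem_filter]
        exact ⟨Finset.mem_univ _, fun e'' => le_trans hle (hemin e'')⟩
      have := hemax e' he'T
      have hDlt : D e < D e' := hltD
      simp only [D] at this hDlt
      linarith
end

section
/- Let σ be a permutation of {1, ..., N_0} satisfying the non-crossing property: for all indices i ≠ i', the closed interval with endpoints p_i and q_{σ(i)} and the closed interval with endpoints p_{i'} and q_{σ(i')} are either disjoint or one is contained in the other. Then between any pair of matched points there are as many supply points as demand points: for every i, the number of indices j with p_j strictly between p_i and q_{σ(i)} equals the number of indices j with q_j strictly between p_i and q_{σ(i)}. -/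
theorem stmt_6
    (N₀ : ℕ) (hN₀ : 1 ≤ N₀)
    (p q : ℕ → ℝ)
    (hdist : Set.InjOn p (Set.Icc 1 N₀) ∧ Set.InjOn q (Set.Icc 1 N₀) ∧
      ∀ i ∈ Set.Icc 1 N₀, ∀ j ∈ Set.Icc 1 N₀, p i ≠ q j)
    (σ : ℕ → ℕ)
    (hσ : Set.BijOn σ (Set.Icc 1 N₀) (Set.Icc 1 N₀))
    (hnc : ∀ i ∈ Set.Icc 1 N₀, ∀ i' ∈ Set.Icc 1 N₀, i ≠ i' →
      Disjoint (Set.uIcc (p i) (q (σ i))) (Set.uIcc (p i') (q (σ i'))) ∨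
      Set.uIcc (p i) (q (σ i)) ⊆ Set.uIcc (p i') (q (σ i')) ∨
      Set.uIcc (p i') (q (σ i')) ⊆ Set.uIcc (p i) (q (σ i)))
    : ∀ i ∈ Set.Icc 1 N₀,
      ((Finset.Icc 1 N₀).filter (fun j =>
        p j ∈ Set.Ioo (min (p i) (q (σ i))) (max (p i) (q (σ i))))).card =
      ((Finset.Icc 1 N₀).filter (fun j =>
        q j ∈ Set.Ioo (min (p i) (q (σ i))) (max (p i) (q (σ i))))).card := by
  obtain ⟨hp, hq, hpq⟩ := hdist
  intro i hi
  set m := min (p i) (q (σ i)) with hm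
  set M := max (p i) (q (σ i)) with hM
  have hσi : σ i ∈ Set.Icc 1 N₀ := hσ.mapsTo hi
  have hII : Set.uIcc (p i) (q (σ i)) = Set.Icc m M := by
    rfl
  -- key: for j in range, p j is strictly inside iff q (σ j) is
  have key : ∀ j ∈ Set.Icc 1 N₀, (p j ∈ Set.Ioo m M ↔ q (σ j) ∈ Set.Ioo m M) := by
    intro j hj
    by_cases hji : j = i
    · subst hji
      constructor <;> intro h <;> exfalso <;>
        rcases le_total (p j) (q (σ j)) with h' | h' <;>
        rw [Set.mem_Ioo, hm, hM] at h <;>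
        [ simp [min_eq_left h', max_eq_right h'] at h;
          simp [min_eq_right h', max_eq_left h'] at h;
          simp [min_eq_left h', max_eq_right h'] at h;
          simp [min_eq_right h', max_eq_left h'] at h ] <;>
        linarith [h.1, h.2]
    · have hσj : σ j ∈ Set.Icc 1 N₀ := hσ.mapsTo hj
      have hσji : σ j ≠ σ i := fun h => hji (hσ.injOn hj hi h)
      rcases hnc j hj i hi hji with hd | hsub | hsub
      · -- disjoint: both sides false
        have hIoo : Set.Ioo m M ⊆ Set.uIcc (p i) (q (σ i)) := by
          rw [hII]; exact Set.Ioo_subset_Icc_self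
        constructor <;> intro h <;> exfalso
        · exact Set.disjoint_left.mp hd Set.left_mem_uIcc (hIoo h)
        · exact Set.disjoint_left.mp hd Set.right_mem_uIcc (hIoo h)
      · -- uIcc j ⊆ uIcc i : both sides true
        rw [hII] at hsub
        have hpj : p j ∈ Set.Icc m M := hsub Set.left_mem_uIcc
        have hqj : q (σ j) ∈ Set.Icc m M := hsub Set.right_mem_uIcc
        have hpjm : p j ≠ p i := fun h => hji (hp hj hi h)
        have hpjq : p j ≠ q (σ i) := hpq j hj (σ i) hσi
        have hqjq : q (σ j) ≠ q (σ i) := fun h => hσji (hq hσj hσi h)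
        have hqjp : q (σ j) ≠ p i := (hpq i hi (σ j) hσj).symm
        have h1 : p j ≠ m := by
          rcases min_cases (p i) (q (σ i)) with ⟨e, _⟩ | ⟨e, _⟩ <;> rw [hm, e] <;> assumption
        have h2 : p j ≠ M := by
          rcases max_cases (p i) (q (σ i)) with ⟨e, _⟩ | ⟨e, _⟩ <;> rw [hM, e] <;> assumption
        have h3 : q (σ j) ≠ m := by
          rcases min_cases (p i) (q (σ i)) with ⟨e, _⟩ | ⟨e, _⟩ <;> rw [hm, e] <;> assumption
        have h4 : q (σ j) ≠ M := by
          rcases max_cases (p i) (q (σ i)) with ⟨e, _⟩ | ⟨e, _⟩ <;> rw [hM, e] <;> assumption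
        constructor <;> intro _ <;> constructor
        · exact lt_of_le_of_ne hqj.1 (Ne.symm h3)
        · exact lt_of_le_of_ne hqj.2 h4
        · exact lt_of_le_of_ne hpj.1 (Ne.symm h1)
        · exact lt_of_le_of_ne hpj.2 h2
      · -- uIcc i ⊆ uIcc j : both sides false
        have hJJ : Set.uIcc (p j) (q (σ j)) =
            Set.Icc (min (p j) (q (σ j))) (max (p j) (q (σ j))) := by
          rfl
        rw [hII, hJJ] at hsub
        have hmM : m ≤ M := min_le_max
        have hmem : m ∈ Set.Icc (min (p j) (q (σ j))) (max (p j) (q (σ j))) :=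
          hsub ⟨le_refl m, hmM⟩
        have hMem : M ∈ Set.Icc (min (p j) (q (σ j))) (max (p j) (q (σ j))) :=
          hsub ⟨hmM, le_refl M⟩
        constructor <;> intro h <;> exfalso <;> rw [Set.mem_Ioo] at h <;>
          rcases le_total (p j) (q (σ j)) with h' | h'
        · have := hmem.1; rw [min_eq_left h'] at this; linarith [h.1]
        · have := hMem.2; rw [max_eq_left h'] at this; linarith [h.2]
        · have := hMem.2; rw [max_eq_right h'] at this; linarith [h.2]
        · have := hmem.1; rw [min_eq_right h'] at this; linarith [h.1]
  -- now count using the bijection σ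
  have hmem_iff : ∀ j : ℕ, j ∈ Finset.Icc 1 N₀ ↔ j ∈ Set.Icc 1 N₀ := by
    intro j; rw [Finset.mem_Icc, Set.mem_Icc]
  apply Finset.card_bij (fun j _ => σ j)
  · intro j hjf
    rw [Finset.mem_filter] at hjf ⊢
    have hj := (hmem_iff j).mp hjf.1
    exact ⟨(hmem_iff (σ j)).mpr (hσ.mapsTo hj), (key j hj).mp hjf.2⟩
  · intro a ha b hb h
    rw [Finset.mem_filter] at ha hb
    exact hσ.injOn ((hmem_iff a).mp ha.1) ((hmem_iff b).mp hb.1) h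
  · intro k hk
    rw [Finset.mem_filter] at hk
    obtain ⟨j, hj, hjk⟩ := hσ.surjOn ((hmem_iff k).mp hk.1)
    refine ⟨j, ?_, hjk⟩
    rw [Finset.mem_filter]
    refine ⟨(hmem_iff j).mpr hj, (key j hj).mpr ?_⟩
    rw [hjk]; exact hk.2
end

section
/- Assume that all local matching indicators are nonnegative: I^p_k(i) ≥ 0 for all 1 ≤ k ≤ N−1 and 1 ≤ i ≤ N−k, and I^q_k(i') ≥ 0 for all 1 ≤ k ≤ N−2 and 1 ≤ i' ≤ N−k−1. Then the identity permutation is optimal: C(id) ≤ C(σ) for every permutation σ of {1, ..., N}, i.e. matching each p_i with q_i minimizes the transport cost. -/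
open Finset


/-- concavity: equal-sum pairs, the more balanced pair has larger g-sum -/
lemma concave_ineq {g : ℝ → ℝ} (hg : ConcaveOn ℝ Set.univ g)
    {A u v B : ℝ} (hAu : A ≤ u) (hAv : A ≤ v) (huB : u ≤ B) (hvB : v ≤ B)
    (hsum : A + B = u + v) : g A + g B ≤ g u + g v := by
  rcases eq_or_lt_of_le (hAu.trans huB) with h | h
  · have hu : u = A := le_antisymm (h ▸ huB) hAu
    have hv : v = A := by linarith
    rw [hu, hv, ← h]
  · set t := (B - u) / (B - A) with ht
    have hBA : 0 < B - A := by linarith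
    have ht0 : 0 ≤ t := div_nonneg (by linarith) (by linarith)
    have ht1 : t ≤ 1 := by rw [ht, div_le_one hBA]; linarith
    have htu : t * (B - A) = B - u := by rw [ht]; field_simp
    have hu' : t • A + (1 - t) • B = u := by simp only [smul_eq_mul]; nlinarith
    have hv' : (1 - t) • A + t • B = v := by simp only [smul_eq_mul]; nlinarith
    have g1 := hg.2 (Set.mem_univ A) (Set.mem_univ B) ht0
      (show (0:ℝ) ≤ 1 - t by linarith) (show t + (1 - t) = 1 by ring)
    have g2 := hg.2 (Set.mem_univ A) (Set.mem_univ B)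
      (show (0:ℝ) ≤ 1 - t by linarith) ht0 (show (1 - t) + t = 1 by ring)
    rw [hu'] at g1
    rw [hv'] at g2
    simp only [smul_eq_mul] at g1 g2
    nlinarith

section

/-- position of encoded point: even e ↦ p (e/2), odd e ↦ q (e/2) -/
def pt (p q : ℕ → ℝ) (e : ℕ) : ℝ := if e % 2 = 0 then p (e / 2) else q (e / 2)

lemma pt_lt {N : ℕ} {p q : ℕ → ℝ}
    (hpq : ∀ i, 1 ≤ i → i ≤ N → p i < q i)
    (hqp : ∀ i, 1 ≤ i → i < N → q i < p (i + 1))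
    {e f : ℕ} (he : 2 ≤ e) (hf : f ≤ 2 * N + 1) (hef : e < f) :
    pt p q e < pt p q f := by
  induction f with
  | zero => omega
  | succ f ih =>
    have step : ∀ e', 2 ≤ e' → e' + 1 ≤ 2 * N + 1 → pt p q e' < pt p q (e' + 1) := by
      intro e' h2 hub
      rcases Nat.even_or_odd e' with ⟨m, hm⟩ | ⟨m, hm⟩
      · have h1 : pt p q e' = p m := by
          simp only [pt]; rw [if_pos (by omega)]; congr 1; omega
        have h2' : pt p q (e' + 1) = q m := by
          simp only [pt]; rw [if_neg (by omega)]; congr 1; omega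
        rw [h1, h2']; exact hpq m (by omega) (by omega)
      · have h1 : pt p q e' = q m := by
          simp only [pt]; rw [if_neg (by omega)]; congr 1; omega
        have h2' : pt p q (e' + 1) = p (m + 1) := by
          simp only [pt]; rw [if_pos (by omega)]; congr 1; omega
        rw [h1, h2']; exact hqp m (by omega) (by omega)
    rcases Nat.lt_or_ge e f with h | h
    · exact (ih (by omega) (by omega)).trans (step f (by omega) (by omega))
    · have : e = f := by omega
      subst this
      exact step e he (by omega)

end

/-- arc crossing predicate on encodings -/
def Cross (i s j t : ℕ) : Prop :=
  (min (2*i) (2*s+1) < min (2*j) (2*t+1) ∧ min (2*j) (2*t+1) < max (2*i) (2*s+1)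
      ∧ max (2*i) (2*s+1) < max (2*j) (2*t+1)) ∨
  (min (2*j) (2*t+1) < min (2*i) (2*s+1) ∧ min (2*i) (2*s+1) < max (2*j) (2*t+1)
      ∧ max (2*j) (2*t+1) < max (2*i) (2*s+1))

def arclen (i s : ℕ) : ℕ := max (2*i) (2*s+1) - min (2*i) (2*s+1)

def fm (N l : ℕ) : ℕ := ((2*N+1)^2 + 1) * l - l * l

lemma fm_cast {N l : ℕ} (h : l ≤ 2*N+1) :
    (fm N l : ℤ) = ((2*N+1)^2 + 1) * l - l * l := by
  have : l * l ≤ ((2*N+1)^2 + 1) * l :=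
    Nat.mul_le_mul_right l (le_trans h (by nlinarith))
  simp only [fm]
  push_cast [Nat.cast_sub this]
  ring

lemma fm_nested {N e1 e2 e3 e4 : ℕ} (h12 : e1 < e2) (h23 : e2 < e3) (h34 : e3 < e4)
    (hub : e4 ≤ 2*N+1) :
    fm N (e4-e1) + fm N (e3-e2) < fm N (e3-e1) + fm N (e4-e2) := by
  have c1 := fm_cast (N := N) (l := e4-e1) (by omega)
  have c2 := fm_cast (N := N) (l := e3-e2) (by omega)
  have c3 := fm_cast (N := N) (l := e3-e1) (by omega)
  have c4 := fm_cast (N := N) (l := e4-e2) (by omega)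
  have : (fm N (e4-e1) : ℤ) + fm N (e3-e2) < fm N (e3-e1) + fm N (e4-e2) := by
    rw [c1, c2, c3, c4]
    push_cast [Nat.cast_sub (by omega : e1 ≤ e4), Nat.cast_sub (by omega : e2 ≤ e3),
      Nat.cast_sub (by omega : e1 ≤ e3), Nat.cast_sub (by omega : e2 ≤ e4)]
    nlinarith [mul_pos (show (0:ℤ) < e4 - e3 by push_cast; omega)
      (show (0:ℤ) < e2 - e1 by push_cast; omega)]
  exact_mod_cast this

lemma fm_disjoint {N e1 e2 e3 e4 : ℕ} (h12 : e1 < e2) (h23 : e2 < e3) (h34 : e3 < e4)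
    (hub : e4 ≤ 2*N+1) :
    fm N (e2-e1) + fm N (e4-e3) < fm N (e3-e1) + fm N (e4-e2) := by
  have c1 := fm_cast (N := N) (l := e2-e1) (by omega)
  have c2 := fm_cast (N := N) (l := e4-e3) (by omega)
  have c3 := fm_cast (N := N) (l := e3-e1) (by omega)
  have c4 := fm_cast (N := N) (l := e4-e2) (by omega)
  have : (fm N (e2-e1) : ℤ) + fm N (e4-e3) < fm N (e3-e1) + fm N (e4-e2) := by
    rw [c1, c2, c3, c4]
    push_cast [Nat.cast_sub (by omega : e1 ≤ e2), Nat.cast_sub (by omega : e3 ≤ e4),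
      Nat.cast_sub (by omega : e1 ≤ e3), Nat.cast_sub (by omega : e2 ≤ e4)]
    have hb1 : (e3:ℤ) - e1 ≤ 2*N+1 := by push_cast; omega
    have hb2 : (e4:ℤ) - e2 ≤ 2*N+1 := by push_cast; omega
    have hd : (e2:ℤ) + 1 ≤ e3 := by push_cast; omega
    nlinarith [sq_nonneg ((e2:ℤ) - e1), sq_nonneg ((e4:ℤ) - e3),
      sq_nonneg ((e3:ℤ) - e1), sq_nonneg ((e4:ℤ) - e2)]
  exact_mod_cast this

section SwapLemma

variable {N : ℕ} {p q : ℕ → ℝ} {g : ℝ → ℝ} {c : ℝ → ℝ → ℝ}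

lemma cost_eq (hpq : ∀ i, 1 ≤ i → i ≤ N → p i < q i)
    (hqp : ∀ i, 1 ≤ i → i < N → q i < p (i + 1))
    (hc : ∀ x y, c x y = g |x - y|)
    {x y : ℕ} (hx1 : 1 ≤ x) (hxN : x ≤ N) (hy1 : 1 ≤ y) (hyN : y ≤ N) :
    c (p x) (q y) = g (pt p q (max (2*x) (2*y+1)) - pt p q (min (2*x) (2*y+1))) := by
  have hpx : pt p q (2*x) = p x := by
    simp only [pt]; rw [if_pos (by omega)]; congr 1; omega
  have hqy : pt p q (2*y+1) = q y := by
    simp only [pt]; rw [if_neg (by omega)]; congr 1; omega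
  rcases le_or_gt x y with h | h
  · have hlt : p x < q y := by
      rw [← hpx, ← hqy]; exact pt_lt hpq hqp (by omega) (by omega) (by omega)
    rw [hc, show max (2*x) (2*y+1) = 2*y+1 by omega, show min (2*x) (2*y+1) = 2*x by omega,
      hpx, hqy, abs_sub_comm, abs_of_nonneg (by linarith)]
  · have hlt : q y < p x := by
      rw [← hpx, ← hqy]; exact pt_lt hpq hqp (by omega) (by omega) (by omega)
    rw [hc, show max (2*x) (2*y+1) = 2*x by omega, show min (2*x) (2*y+1) = 2*y+1 by omega,
      hpx, hqy, abs_of_nonneg (by linarith)]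

lemma swap_one (hpq : ∀ i, 1 ≤ i → i ≤ N → p i < q i)
    (hqp : ∀ i, 1 ≤ i → i < N → q i < p (i + 1))
    (hg : ConcaveOn ℝ Set.univ g) (hgmono : MonotoneOn g (Set.Ici 0))
    (hc : ∀ x y, c x y = g |x - y|)
    {i s j t : ℕ} (hi1 : 1 ≤ i) (hiN : i ≤ N) (hs1 : 1 ≤ s) (hsN : s ≤ N)
    (hj1 : 1 ≤ j) (hjN : j ≤ N) (ht1 : 1 ≤ t) (htN : t ≤ N)
    (hcr : min (2*i) (2*s+1) < min (2*j) (2*t+1) ∧ min (2*j) (2*t+1) < max (2*i) (2*s+1)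
      ∧ max (2*i) (2*s+1) < max (2*j) (2*t+1)) :
    c (p i) (q t) + c (p j) (q s) ≤ c (p i) (q s) + c (p j) (q t) ∧
    fm N (arclen i t) + fm N (arclen j s) < fm N (arclen i s) + fm N (arclen j t) := by
  have P : ∀ e f : ℕ, 2 ≤ e → f ≤ 2*N+1 → e < f → pt p q e < pt p q f :=
    fun e f he hf hef => pt_lt hpq hqp he hf hef
  have ceq : ∀ x y : ℕ, 1 ≤ x → x ≤ N → 1 ≤ y → y ≤ N →
      c (p x) (q y) = g (pt p q (max (2*x) (2*y+1)) - pt p q (min (2*x) (2*y+1))) :=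
    fun x y h1 h2 h3 h4 => cost_eq hpq hqp hc h1 h2 h3 h4
  obtain ⟨hc1, hc2, hc3⟩ := hcr
  rw [ceq i t hi1 hiN ht1 htN, ceq j s hj1 hjN hs1 hsN, ceq i s hi1 hiN hs1 hsN,
    ceq j t hj1 hjN ht1 htN]
  rcases le_or_gt i s with his | his <;> rcases le_or_gt j t with hjt | hjt
  · -- i ≤ s, j ≤ t : pattern  2i < 2j < 2s+1 < 2t+1, nested
    have e1 : min (2*i) (2*s+1) = 2*i := by omega
    have e2 : max (2*i) (2*s+1) = 2*s+1 := by omega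
    have e3 : min (2*j) (2*t+1) = 2*j := by omega
    have e4 : max (2*j) (2*t+1) = 2*t+1 := by omega
    have e5 : min (2*i) (2*t+1) = 2*i := by omega
    have e6 : max (2*i) (2*t+1) = 2*t+1 := by omega
    have e7 : min (2*j) (2*s+1) = 2*j := by omega
    have e8 : max (2*j) (2*s+1) = 2*s+1 := by omega
    simp only [e1,e2,e3,e4,e5,e6,e7,e8] at hc1 hc2 hc3 ⊢
    constructor
    · have hA := P (2*i) (2*j) (by omega) (by omega) (by omega)
      have hB := P (2*s+1) (2*t+1) (by omega) (by omega) (by omega)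
      have := concave_ineq hg
        (show pt p q (2*s+1) - pt p q (2*j) ≤ pt p q (2*s+1) - pt p q (2*i) by linarith)
        (show pt p q (2*s+1) - pt p q (2*j) ≤ pt p q (2*t+1) - pt p q (2*j) by linarith)
        (show pt p q (2*s+1) - pt p q (2*i) ≤ pt p q (2*t+1) - pt p q (2*i) by linarith)
        (show pt p q (2*t+1) - pt p q (2*j) ≤ pt p q (2*t+1) - pt p q (2*i) by linarith)
        (by ring)
      linarith
    · rw [show arclen i t = 2*t+1 - 2*i by unfold arclen; omega,
        show arclen j s = 2*s+1 - 2*j by unfold arclen; omega,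
        show arclen i s = 2*s+1 - 2*i by unfold arclen; omega,
        show arclen j t = 2*t+1 - 2*j by unfold arclen; omega]
      exact fm_nested hc1 hc2 hc3 (by omega)
  · -- i ≤ s, t < j : pattern 2i < 2t+1 < 2s+1 < 2j, disjoint
    have e1 : min (2*i) (2*s+1) = 2*i := by omega
    have e2 : max (2*i) (2*s+1) = 2*s+1 := by omega
    have e3 : min (2*j) (2*t+1) = 2*t+1 := by omega
    have e4 : max (2*j) (2*t+1) = 2*j := by omega
    have e5 : min (2*i) (2*t+1) = 2*i := by omega
    have e6 : max (2*i) (2*t+1) = 2*t+1 := by omega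
    have e7 : min (2*j) (2*s+1) = 2*s+1 := by omega
    have e8 : max (2*j) (2*s+1) = 2*j := by omega
    simp only [e1,e2,e3,e4,e5,e6,e7,e8] at hc1 hc2 hc3 ⊢
    have p12 : pt p q (2*i) < pt p q (2*t+1) := P _ _ (by omega) (by omega) (by omega)
    have p23 : pt p q (2*t+1) < pt p q (2*s+1) := P _ _ (by omega) (by omega) (by omega)
    have p34 : pt p q (2*s+1) < pt p q (2*j) := P _ _ (by omega) (by omega) (by omega)
    constructor
    · have m1 := hgmono (Set.mem_Ici.mpr (by linarith : (0:ℝ) ≤ pt p q (2*t+1) - pt p q (2*i)))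
        (Set.mem_Ici.mpr (by linarith : (0:ℝ) ≤ pt p q (2*s+1) - pt p q (2*i))) (by linarith)
      have m2 := hgmono (Set.mem_Ici.mpr (by linarith : (0:ℝ) ≤ pt p q (2*j) - pt p q (2*s+1)))
        (Set.mem_Ici.mpr (by linarith : (0:ℝ) ≤ pt p q (2*j) - pt p q (2*t+1))) (by linarith)
      linarith
    · rw [show arclen i t = 2*t+1 - 2*i by unfold arclen; omega,
        show arclen j s = 2*j - (2*s+1) by unfold arclen; omega,
        show arclen i s = 2*s+1 - 2*i by unfold arclen; omega,
        show arclen j t = 2*j - (2*t+1) by unfold arclen; omega]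
      exact fm_disjoint hc1 hc2 hc3 (by omega)
  · -- s < i, j ≤ t : pattern 2s+1 < 2j < 2i < 2t+1, disjoint
    have e1 : min (2*i) (2*s+1) = 2*s+1 := by omega
    have e2 : max (2*i) (2*s+1) = 2*i := by omega
    have e3 : min (2*j) (2*t+1) = 2*j := by omega
    have e4 : max (2*j) (2*t+1) = 2*t+1 := by omega
    have e5 : min (2*i) (2*t+1) = 2*i := by omega
    have e6 : max (2*i) (2*t+1) = 2*t+1 := by omega
    have e7 : min (2*j) (2*s+1) = 2*s+1 := by omega
    have e8 : max (2*j) (2*s+1) = 2*j := by omega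
    simp only [e1,e2,e3,e4,e5,e6,e7,e8] at hc1 hc2 hc3 ⊢
    have p12 : pt p q (2*s+1) < pt p q (2*j) := P _ _ (by omega) (by omega) (by omega)
    have p23 : pt p q (2*j) < pt p q (2*i) := P _ _ (by omega) (by omega) (by omega)
    have p34 : pt p q (2*i) < pt p q (2*t+1) := P _ _ (by omega) (by omega) (by omega)
    constructor
    · have m1 := hgmono (Set.mem_Ici.mpr (by linarith : (0:ℝ) ≤ pt p q (2*t+1) - pt p q (2*i)))
        (Set.mem_Ici.mpr (by linarith : (0:ℝ) ≤ pt p q (2*t+1) - pt p q (2*j))) (by linarith)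
      have m2 := hgmono (Set.mem_Ici.mpr (by linarith : (0:ℝ) ≤ pt p q (2*j) - pt p q (2*s+1)))
        (Set.mem_Ici.mpr (by linarith : (0:ℝ) ≤ pt p q (2*i) - pt p q (2*s+1))) (by linarith)
      linarith
    · rw [show arclen i t = 2*t+1 - 2*i by unfold arclen; omega,
        show arclen j s = 2*j - (2*s+1) by unfold arclen; omega,
        show arclen i s = 2*i - (2*s+1) by unfold arclen; omega,
        show arclen j t = 2*t+1 - 2*j by unfold arclen; omega]
      have := fm_disjoint hc1 hc2 hc3 (show 2*t+1 ≤ 2*N+1 by omega)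
      omega
  · -- s < i, t < j : pattern 2s+1 < 2t+1 < 2i < 2j, nested
    have e1 : min (2*i) (2*s+1) = 2*s+1 := by omega
    have e2 : max (2*i) (2*s+1) = 2*i := by omega
    have e3 : min (2*j) (2*t+1) = 2*t+1 := by omega
    have e4 : max (2*j) (2*t+1) = 2*j := by omega
    have e5 : min (2*i) (2*t+1) = 2*t+1 := by omega
    have e6 : max (2*i) (2*t+1) = 2*i := by omega
    have e7 : min (2*j) (2*s+1) = 2*s+1 := by omega
    have e8 : max (2*j) (2*s+1) = 2*j := by omega
    simp only [e1,e2,e3,e4,e5,e6,e7,e8] at hc1 hc2 hc3 ⊢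
    constructor
    · have h1 := P (2*s+1) (2*t+1) (by omega) (by omega) (by omega)
      have h2 := P (2*t+1) (2*i) (by omega) (by omega) (by omega)
      have h3 := P (2*i) (2*j) (by omega) (by omega) (by omega)
      have := concave_ineq hg
        (show pt p q (2*i) - pt p q (2*t+1) ≤ pt p q (2*i) - pt p q (2*s+1) by linarith)
        (show pt p q (2*i) - pt p q (2*t+1) ≤ pt p q (2*j) - pt p q (2*t+1) by linarith)
        (show pt p q (2*i) - pt p q (2*s+1) ≤ pt p q (2*j) - pt p q (2*s+1) by linarith)
        (show pt p q (2*j) - pt p q (2*t+1) ≤ pt p q (2*j) - pt p q (2*s+1) by linarith)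
        (by ring)
      linarith
    · rw [show arclen i t = 2*i - (2*t+1) by unfold arclen; omega,
        show arclen j s = 2*j - (2*s+1) by unfold arclen; omega,
        show arclen i s = 2*i - (2*s+1) by unfold arclen; omega,
        show arclen j t = 2*j - (2*t+1) by unfold arclen; omega]
      have := fm_nested hc1 hc2 hc3 (show 2*j ≤ 2*N+1 by omega)
      omega

lemma swap_ineq (hpq : ∀ i, 1 ≤ i → i ≤ N → p i < q i)
    (hqp : ∀ i, 1 ≤ i → i < N → q i < p (i + 1))
    (hg : ConcaveOn ℝ Set.univ g) (hgmono : MonotoneOn g (Set.Ici 0))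
    (hc : ∀ x y, c x y = g |x - y|)
    {i s j t : ℕ} (hi1 : 1 ≤ i) (hiN : i ≤ N) (hs1 : 1 ≤ s) (hsN : s ≤ N)
    (hj1 : 1 ≤ j) (hjN : j ≤ N) (ht1 : 1 ≤ t) (htN : t ≤ N)
    (hcr : Cross i s j t) :
    c (p i) (q t) + c (p j) (q s) ≤ c (p i) (q s) + c (p j) (q t) ∧
    fm N (arclen i t) + fm N (arclen j s) < fm N (arclen i s) + fm N (arclen j t) := by
  rcases hcr with h | h
  · exact swap_one hpq hqp hg hgmono hc hi1 hiN hs1 hsN hj1 hjN ht1 htN h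
  · have := swap_one hpq hqp hg hgmono hc hj1 hjN ht1 htN hi1 hiN hs1 hsN h
    exact ⟨by linarith [this.1], by omega⟩

end SwapLemma

lemma sum_split (f : ℕ → ℝ) {a s b : ℕ} (h1 : 1 ≤ a) (h2 : a ≤ s + 1) (h3 : s ≤ b) :
    ∑ i ∈ Icc a b, f i = (∑ i ∈ Icc a s, f i) + ∑ i ∈ Icc (s+1) b, f i := by
  rw [show a = (a-1)+1 by omega, Finset.Icc_add_one_left_eq_Ioc, Finset.Icc_add_one_left_eq_Ioc, Finset.Icc_add_one_left_eq_Ioc,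
    Finset.sum_Ioc_consecutive f (by omega : a-1 ≤ s) h3]

lemma sum_Icc_range (f : ℕ → ℝ) (a b : ℕ) :
    ∑ i ∈ Icc a b, f i = ∑ ℓ ∈ range (b+1-a), f (a+ℓ) := by
  rw [← Finset.Ico_add_one_right_eq_Icc, Finset.sum_Ico_eq_sum_range]

def NCon (σ : ℕ → ℕ) (D : Finset ℕ) : Prop := ∀ i ∈ D, ∀ j ∈ D, ¬ Cross i (σ i) j (σ j)

lemma structural
    {N : ℕ} {p q : ℕ → ℝ} {c : ℝ → ℝ → ℝ} {Ip Iq : ℕ → ℕ → ℝ}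
    (hIp : ∀ k i, Ip k i =
      c (p i) (q (i + k))
      + ∑ ℓ ∈ Finset.range k, c (p (i + ℓ + 1)) (q (i + ℓ))
      - ∑ ℓ ∈ Finset.range (k + 1), c (p (i + ℓ)) (q (i + ℓ)))
    (hIq : ∀ k i, Iq k i =
      c (p (i + k + 1)) (q i)
      + ∑ ℓ ∈ Finset.Icc 1 k, c (p (i + ℓ)) (q (i + ℓ))
      - ∑ ℓ ∈ Finset.range (k + 1), c (p (i + ℓ + 1)) (q (i + ℓ)))
    (h1 : ∀ k i, 1 ≤ k → k ≤ N - 1 → 1 ≤ i → i ≤ N - k → 0 ≤ Ip k i)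
    (h2 : ∀ k i, 1 ≤ k → k ≤ N - 2 → 1 ≤ i → i ≤ N - k - 1 → 0 ≤ Iq k i) :
    ∀ m : ℕ,
      (∀ a b σ, 1 ≤ a → b ≤ N → b + 1 - a = m →
        Set.BijOn σ (Set.Icc a b) (Set.Icc a b) → NCon σ (Finset.Icc a b) →
        ∑ i ∈ Finset.Icc a b, c (p i) (q i) ≤ ∑ i ∈ Finset.Icc a b, c (p i) (q (σ i))) ∧
      (∀ a b τ, 1 ≤ a → b ≤ N → b - a = m →
        Set.BijOn τ (Set.Icc (a+1) b) (Set.Icc a (b-1)) → NCon τ (Finset.Icc (a+1) b) →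
        ∑ i ∈ Finset.Icc a (b-1), c (p (i+1)) (q i) ≤
          ∑ i ∈ Finset.Icc (a+1) b, c (p i) (q (τ i))) := by
  intro m
  induction m using Nat.strong_induction_on with
  | _ m IH =>
  constructor
  · -- statement A
    intro a b σ ha hb hm hbij hnc
    rcases Nat.lt_or_ge b a with hba | hab
    · rw [Finset.Icc_eq_empty (by omega)]; simp
    rcases eq_or_lt_of_le hab with heq | hlt
    · -- a = b
      subst heq
      have hσa : σ a ∈ Set.Icc a a := hbij.mapsTo (Set.mem_Icc.mpr ⟨le_refl a, le_refl a⟩)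
      rw [Set.mem_Icc] at hσa
      have : σ a = a := le_antisymm hσa.2 hσa.1
      rw [Finset.Icc_self, Finset.sum_singleton, Finset.sum_singleton, this]
    · -- a < b
      have hsmem : σ a ∈ Set.Icc a b := hbij.mapsTo (Set.mem_Icc.mpr ⟨le_refl a, le_of_lt hlt⟩)
      rw [Set.mem_Icc] at hsmem
      set s := σ a with hs
      have claim1 : ∀ x, a ≤ x → x ≤ s → a ≤ σ x ∧ σ x ≤ s := by
        intro x hax hxs
        rcases eq_or_lt_of_le hax with rfl | hax'
        · exact ⟨hsmem.1, le_refl s⟩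
        · have htmem : σ x ∈ Set.Icc a b := hbij.mapsTo (Set.mem_Icc.mpr ⟨hax, hxs.trans hsmem.2⟩)
          rw [Set.mem_Icc] at htmem
          refine ⟨htmem.1, ?_⟩
          by_contra hcon
          push_neg at hcon
          exact hnc a (Finset.mem_Icc.mpr (by omega)) x (Finset.mem_Icc.mpr (by omega))
            (by unfold Cross; omega)
      have claim2 : ∀ x, a ≤ x → x ≤ b → s < x → s < σ x := by
        intro x hax hxb hsx
        have hxa : a < x := lt_of_le_of_lt hsmem.1 hsx
        have htmem : σ x ∈ Set.Icc a b := hbij.mapsTo (Set.mem_Icc.mpr ⟨hax, hxb⟩)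
        rw [Set.mem_Icc] at htmem
        by_contra hcon
        push_neg at hcon
        have hne : σ x ≠ s := by
          intro hE
          exact absurd (hbij.injOn (Set.mem_Icc.mpr ⟨hax, hxb⟩)
            (Set.mem_Icc.mpr ⟨le_refl a, le_of_lt hlt⟩) (hE.trans hs)) (by omega)
        exact hnc a (Finset.mem_Icc.mpr (by omega)) x (Finset.mem_Icc.mpr (by omega))
          (by unfold Cross; omega)
      rcases eq_or_lt_of_le hsmem.2 with hsb | hsb
      · -- σ a = b : big arc case
        have hbij2 : Set.BijOn σ (Set.Icc (a+1) b) (Set.Icc a (b-1)) := by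
          refine ⟨?_, fun x hx y hy hxy => hbij.injOn
            (Set.mem_Icc.mpr (by rw [Set.mem_Icc] at hx; omega))
            (Set.mem_Icc.mpr (by rw [Set.mem_Icc] at hy; omega)) hxy, ?_⟩
          · intro x hx
            rw [Set.mem_Icc] at hx
            have hxm : σ x ∈ Set.Icc a b := hbij.mapsTo (Set.mem_Icc.mpr (by omega))
            rw [Set.mem_Icc] at hxm
            have hne : σ x ≠ b := by
              intro hE
              have hEE : σ x = σ a := by omega
              exact absurd (hbij.injOn (Set.mem_Icc.mpr (by omega))
                (Set.mem_Icc.mpr ⟨le_refl a, le_of_lt hlt⟩) hEE) (by omega)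
            exact Set.mem_Icc.mpr (by omega)
          · intro y hy
            rw [Set.mem_Icc] at hy
            obtain ⟨x, hxm, hxy⟩ := hbij.surjOn (Set.mem_Icc.mpr (by omega : a ≤ y ∧ y ≤ b))
            rw [Set.mem_Icc] at hxm
            have hxa : x ≠ a := by intro hE; subst hE; omega
            exact ⟨x, Set.mem_Icc.mpr (by omega), hxy⟩
        have hnc2 : NCon σ (Finset.Icc (a+1) b) := by
          intro i hi j hj
          rw [Finset.mem_Icc] at hi hj
          exact hnc i (Finset.mem_Icc.mpr (by omega)) j (Finset.mem_Icc.mpr (by omega))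
        have hB := (IH (b - a) (by omega)).2 a b σ ha hb rfl hbij2 hnc2
        have hip := h1 (b-a) a (by omega) (by omega) (by omega) (by omega)
        rw [hIp, show a + (b-a) = b by omega] at hip
        have conv1 : ∑ ℓ ∈ range (b-a), c (p (a+ℓ+1)) (q (a+ℓ))
            = ∑ i ∈ Finset.Icc a (b-1), c (p (i+1)) (q i) := by
          rw [sum_Icc_range (fun i => c (p (i+1)) (q i)) a (b-1), show b-1+1-a = b-a by omega]
        have conv2 : ∑ ℓ ∈ range (b-a+1), c (p (a+ℓ)) (q (a+ℓ))
            = ∑ i ∈ Finset.Icc a b, c (p i) (q i) := by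
          rw [sum_Icc_range (fun i => c (p i) (q i)) a b, show b+1-a = b-a+1 by omega]
        have split1 : ∑ i ∈ Finset.Icc a b, c (p i) (q (σ i))
            = c (p a) (q (σ a)) + ∑ i ∈ Finset.Icc (a+1) b, c (p i) (q (σ i)) := by
          rw [sum_split (fun i => c (p i) (q (σ i))) ha (by omega) hab, Finset.Icc_self,
            Finset.sum_singleton]
        rw [split1, show σ a = b by omega]
        linarith
      · -- σ a = s < b : split case
        have hbij1 : Set.BijOn σ (Set.Icc a s) (Set.Icc a s) := by
          refine ⟨?_, fun x hx y hy hxy => hbij.injOn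
            (Set.mem_Icc.mpr (by rw [Set.mem_Icc] at hx; omega))
            (Set.mem_Icc.mpr (by rw [Set.mem_Icc] at hy; omega)) hxy, ?_⟩
          · intro x hx
            rw [Set.mem_Icc] at hx
            exact Set.mem_Icc.mpr (claim1 x hx.1 hx.2)
          · intro y hy
            rw [Set.mem_Icc] at hy
            obtain ⟨x, hxm, hxy⟩ := hbij.surjOn
              (Set.mem_Icc.mpr (by omega : a ≤ y ∧ y ≤ b))
            rw [Set.mem_Icc] at hxm
            refine ⟨x, Set.mem_Icc.mpr ⟨hxm.1, ?_⟩, hxy⟩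
            by_contra hcon
            push_neg at hcon
            have := claim2 x hxm.1 hxm.2 hcon
            omega
        have hbij2 : Set.BijOn σ (Set.Icc (s+1) b) (Set.Icc (s+1) b) := by
          refine ⟨?_, fun x hx y hy hxy => hbij.injOn
            (Set.mem_Icc.mpr (by rw [Set.mem_Icc] at hx; omega))
            (Set.mem_Icc.mpr (by rw [Set.mem_Icc] at hy; omega)) hxy, ?_⟩
          · intro x hx
            rw [Set.mem_Icc] at hx
            have h2' := claim2 x (by omega) hx.2 (by omega)
            have hxm : σ x ∈ Set.Icc a b := hbij.mapsTo (Set.mem_Icc.mpr (by omega))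
            rw [Set.mem_Icc] at hxm
            exact Set.mem_Icc.mpr (by omega)
          · intro y hy
            rw [Set.mem_Icc] at hy
            obtain ⟨x, hxm, hxy⟩ := hbij.surjOn
              (Set.mem_Icc.mpr (by omega : a ≤ y ∧ y ≤ b))
            rw [Set.mem_Icc] at hxm
            refine ⟨x, Set.mem_Icc.mpr ⟨?_, hxm.2⟩, hxy⟩
            by_contra hcon
            push_neg at hcon
            have := (claim1 x hxm.1 (by omega)).2
            omega
        have hnc1 : NCon σ (Finset.Icc a s) := by
          intro i hi j hj
          rw [Finset.mem_Icc] at hi hj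
          exact hnc i (Finset.mem_Icc.mpr (by omega)) j (Finset.mem_Icc.mpr (by omega))
        have hnc2 : NCon σ (Finset.Icc (s+1) b) := by
          intro i hi j hj
          rw [Finset.mem_Icc] at hi hj
          exact hnc i (Finset.mem_Icc.mpr (by omega)) j (Finset.mem_Icc.mpr (by omega))
        have hA1 := (IH (s+1-a) (by omega)).1 a s σ ha (by omega) rfl hbij1 hnc1
        have hA2 := (IH (b+1-(s+1)) (by omega)).1 (s+1) b σ (by omega) hb rfl hbij2 hnc2
        rw [sum_split (fun i => c (p i) (q i)) ha (by omega) hsmem.2,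
          sum_split (fun i => c (p i) (q (σ i))) ha (by omega) hsmem.2]
        exact add_le_add hA1 hA2
  · -- statement B
    intro a b τ ha hb hm hbij hnc
    rcases Nat.lt_or_ge b (a+1) with hba | hab
    · rw [Finset.Icc_eq_empty (by omega : ¬ a ≤ b-1),
        Finset.Icc_eq_empty (by omega : ¬ a+1 ≤ b)]
      simp
    · -- a < b
      have hamem : a ∈ Set.Icc a (b-1) := Set.mem_Icc.mpr ⟨le_refl a, by omega⟩
      obtain ⟨j, hjmem, hja⟩ := hbij.surjOn hamem
      rw [Set.mem_Icc] at hjmem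
      have claim1 : ∀ x, a+1 ≤ x → x ≤ b → x < j → a+1 ≤ τ x ∧ τ x < j := by
        intro x hx1 hx2 hxj
        have htm : τ x ∈ Set.Icc a (b-1) := hbij.mapsTo (Set.mem_Icc.mpr ⟨hx1, hx2⟩)
        rw [Set.mem_Icc] at htm
        have hne : τ x ≠ a := by
          intro hE
          exact absurd (hbij.injOn (Set.mem_Icc.mpr ⟨hx1, hx2⟩)
            (Set.mem_Icc.mpr ⟨hjmem.1, hjmem.2⟩) (hE.trans hja.symm)) (by omega)
        refine ⟨by omega, ?_⟩
        by_contra hcon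
        push_neg at hcon
        exact hnc j (Finset.mem_Icc.mpr (by omega)) x (Finset.mem_Icc.mpr (by omega))
          (by unfold Cross; omega)
      have claim2 : ∀ x, a+1 ≤ x → x ≤ b → j < x → j ≤ τ x := by
        intro x hx1 hx2 hjx
        have htm : τ x ∈ Set.Icc a (b-1) := hbij.mapsTo (Set.mem_Icc.mpr ⟨hx1, hx2⟩)
        rw [Set.mem_Icc] at htm
        have hne : τ x ≠ a := by
          intro hE
          exact absurd (hbij.injOn (Set.mem_Icc.mpr ⟨hx1, hx2⟩)
            (Set.mem_Icc.mpr ⟨hjmem.1, hjmem.2⟩) (hE.trans hja.symm)) (by omega)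
        by_contra hcon
        push_neg at hcon
        exact hnc j (Finset.mem_Icc.mpr (by omega)) x (Finset.mem_Icc.mpr (by omega))
          (by unfold Cross; omega)
      have hbij1 : Set.BijOn τ (Set.Icc (a+1) (j-1)) (Set.Icc (a+1) (j-1)) := by
        refine ⟨?_, fun x hx y hy hxy => hbij.injOn
          (Set.mem_Icc.mpr (by rw [Set.mem_Icc] at hx; omega))
          (Set.mem_Icc.mpr (by rw [Set.mem_Icc] at hy; omega)) hxy, ?_⟩
        · intro x hx
          rw [Set.mem_Icc] at hx
          have := claim1 x hx.1 (by omega) (by omega)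
          exact Set.mem_Icc.mpr (by omega)
        · intro y hy
          rw [Set.mem_Icc] at hy
          obtain ⟨x, hxm, hxy⟩ := hbij.surjOn
            (Set.mem_Icc.mpr (by omega : a ≤ y ∧ y ≤ b-1))
          rw [Set.mem_Icc] at hxm
          have hxj : x ≠ j := by intro hE; subst hE; omega
          refine ⟨x, Set.mem_Icc.mpr ⟨hxm.1, ?_⟩, hxy⟩
          by_contra hcon
          push_neg at hcon
          have := claim2 x hxm.1 hxm.2 (by omega)
          omega
      have hbij2 : Set.BijOn τ (Set.Icc (j+1) b) (Set.Icc j (b-1)) := by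
        refine ⟨?_, fun x hx y hy hxy => hbij.injOn
          (Set.mem_Icc.mpr (by rw [Set.mem_Icc] at hx; omega))
          (Set.mem_Icc.mpr (by rw [Set.mem_Icc] at hy; omega)) hxy, ?_⟩
        · intro x hx
          rw [Set.mem_Icc] at hx
          have h2' := claim2 x (by omega) hx.2 (by omega)
          have htm : τ x ∈ Set.Icc a (b-1) := hbij.mapsTo (Set.mem_Icc.mpr (by omega))
          rw [Set.mem_Icc] at htm
          exact Set.mem_Icc.mpr (by omega)
        · intro y hy
          rw [Set.mem_Icc] at hy
          obtain ⟨x, hxm, hxy⟩ := hbij.surjOn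
            (Set.mem_Icc.mpr (by omega : a ≤ y ∧ y ≤ b-1))
          rw [Set.mem_Icc] at hxm
          have hxj : x ≠ j := by
            intro hE; subst hE; omega
          refine ⟨x, Set.mem_Icc.mpr ⟨?_, hxm.2⟩, hxy⟩
          by_contra hcon
          push_neg at hcon
          have := (claim1 x hxm.1 hxm.2 (by omega)).2
          omega
      have hnc1 : NCon τ (Finset.Icc (a+1) (j-1)) := by
        intro i hi j' hj'
        rw [Finset.mem_Icc] at hi hj'
        exact hnc i (Finset.mem_Icc.mpr (by omega)) j' (Finset.mem_Icc.mpr (by omega))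
      have hnc2 : NCon τ (Finset.Icc (j+1) b) := by
        intro i hi j' hj'
        rw [Finset.mem_Icc] at hi hj'
        exact hnc i (Finset.mem_Icc.mpr (by omega)) j' (Finset.mem_Icc.mpr (by omega))
      have hA := (IH (j-1+1-(a+1)) (by omega)).1 (a+1) (j-1) τ (by omega) (by omega) rfl
        hbij1 hnc1
      have hB := (IH (b - j) (by omega)).2 j b τ (by omega) hb rfl hbij2 hnc2
      have hind : ∑ i ∈ Finset.Icc a (j-1), c (p (i+1)) (q i) ≤
          c (p j) (q a) + ∑ i ∈ Finset.Icc (a+1) (j-1), c (p i) (q i) := by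
        rcases eq_or_lt_of_le hjmem.1 with hj1 | hj1
        · -- j = a+1
          rw [← hj1]
          rw [show a+1-1 = a by omega, Finset.Icc_self, Finset.sum_singleton,
            Finset.Icc_eq_empty (by omega : ¬ a+1 ≤ a), Finset.sum_empty]
          simp
        · -- a+2 ≤ j
          have hiq := h2 (j-1-a) a (by omega) (by omega) (by omega) (by omega)
          rw [hIq, show a + (j-1-a) + 1 = j by omega] at hiq
          have conv1 : ∑ ℓ ∈ Finset.Icc 1 (j-1-a), c (p (a+ℓ)) (q (a+ℓ))
              = ∑ i ∈ Finset.Icc (a+1) (j-1), c (p i) (q i) := by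
            rw [sum_Icc_range (fun ℓ => c (p (a+ℓ)) (q (a+ℓ))) 1 (j-1-a),
              sum_Icc_range (fun i => c (p i) (q i)) (a+1) (j-1),
              show j-1-a+1-1 = j-1-a by omega, show j-1+1-(a+1) = j-1-a by omega]
            refine Finset.sum_congr rfl fun ℓ _ => by rw [show a+(1+ℓ) = a+1+ℓ by omega]
          have conv2 : ∑ ℓ ∈ range (j-1-a+1), c (p (a+ℓ+1)) (q (a+ℓ))
              = ∑ i ∈ Finset.Icc a (j-1), c (p (i+1)) (q i) := by
            rw [sum_Icc_range (fun i => c (p (i+1)) (q i)) a (j-1),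
              show j-1+1-a = j-1-a+1 by omega]
          linarith
      have split1 : ∑ i ∈ Finset.Icc (a+1) b, c (p i) (q (τ i)) =
          ((∑ i ∈ Finset.Icc (a+1) (j-1), c (p i) (q (τ i))) + c (p j) (q a))
            + ∑ i ∈ Finset.Icc (j+1) b, c (p i) (q (τ i)) := by
        rw [sum_split (fun i => c (p i) (q (τ i))) (by omega) (by omega) hjmem.2,
          sum_split (fun i => c (p i) (q (τ i))) (by omega : 1 ≤ a+1)
            (by omega : a+1 ≤ (j-1)+1) (by omega : j-1 ≤ j),
          show j-1+1 = j by omega, Finset.Icc_self, Finset.sum_singleton, hja]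
      have split2 : ∑ i ∈ Finset.Icc a (b-1), c (p (i+1)) (q i) =
          (∑ i ∈ Finset.Icc a (j-1), c (p (i+1)) (q i))
            + ∑ i ∈ Finset.Icc j (b-1), c (p (i+1)) (q i) := by
        rw [sum_split (fun i => c (p (i+1)) (q i)) ha (by omega : a ≤ (j-1)+1)
          (by omega : j-1 ≤ b-1), show j-1+1 = j by omega]
      rw [split1, split2]
      linarith

lemma bijOn_swap {i j : ℕ} {S : Set ℕ} (hi : i ∈ S) (hj : j ∈ S) :
    Set.BijOn (Equiv.swap i j) S S := by
  have hmt : ∀ x ∈ S, Equiv.swap i j x ∈ S := by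
    intro x hx
    rcases eq_or_ne x i with rfl | hxi
    · rw [Equiv.swap_apply_left]; exact hj
    rcases eq_or_ne x j with rfl | hxj
    · rw [Equiv.swap_apply_right]; exact hi
    · rw [Equiv.swap_apply_of_ne_of_ne hxi hxj]; exact hx
  exact ⟨hmt, (Equiv.injective _).injOn, fun y hy =>
    ⟨Equiv.swap i j y, hmt y hy, Equiv.swap_apply_self i j y⟩⟩

lemma sum_pair_split {M : Type*} [AddCommMonoid M] (D : Finset ℕ) {i j : ℕ} (hij : i ≠ j)
    (hi : i ∈ D) (hj : j ∈ D) (f f' : ℕ → M)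
    (hsame : ∀ k ∈ D, k ≠ i → k ≠ j → f' k = f k) :
    ∑ k ∈ D, f' k + (f i + f j) = ∑ k ∈ D, f k + (f' i + f' j) := by
  have hj' : j ∈ D.erase i := Finset.mem_erase.mpr ⟨Ne.symm hij, hj⟩
  rw [← Finset.add_sum_erase D f' hi, ← Finset.add_sum_erase _ f' hj',
      ← Finset.add_sum_erase D f hi, ← Finset.add_sum_erase _ f hj']
  have he : ∑ k ∈ (D.erase i).erase j, f' k = ∑ k ∈ (D.erase i).erase j, f k :=
    Finset.sum_congr rfl (fun k hk => by
      rw [Finset.mem_erase, Finset.mem_erase] at hk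
      exact hsame k hk.2.2 hk.2.1 hk.1)
  rw [he]; abel

def meas (N : ℕ) (σ : ℕ → ℕ) : ℕ := ∑ i ∈ Icc 1 N, fm N (arclen i (σ i))

lemma cross_step {N : ℕ} {p q : ℕ → ℝ} {g : ℝ → ℝ} {c : ℝ → ℝ → ℝ}
    (hpq : ∀ i, 1 ≤ i → i ≤ N → p i < q i)
    (hqp : ∀ i, 1 ≤ i → i < N → q i < p (i + 1))
    (hg : ConcaveOn ℝ Set.univ g) (hgmono : MonotoneOn g (Set.Ici 0))
    (hc : ∀ x y, c x y = g |x - y|)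
    {σ : ℕ → ℕ} (hbij : Set.BijOn σ (Set.Icc 1 N) (Set.Icc 1 N))
    (hncn : ¬ NCon σ (Finset.Icc 1 N)) :
    ∃ σ', Set.BijOn σ' (Set.Icc 1 N) (Set.Icc 1 N) ∧ meas N σ' < meas N σ ∧
      ∑ i ∈ Icc 1 N, c (p i) (q (σ' i)) ≤ ∑ i ∈ Icc 1 N, c (p i) (q (σ i)) := by
  unfold NCon at hncn
  push_neg at hncn
  obtain ⟨i, hi, j, hj, hcr⟩ := hncn
  rw [Finset.mem_Icc] at hi hj
  have hij : i ≠ j := by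
    rintro rfl
    unfold Cross at hcr
    omega
  have hσi : σ i ∈ Set.Icc 1 N := hbij.mapsTo (Set.mem_Icc.mpr hi)
  have hσj : σ j ∈ Set.Icc 1 N := hbij.mapsTo (Set.mem_Icc.mpr hj)
  rw [Set.mem_Icc] at hσi hσj
  have hsw := swap_ineq hpq hqp hg hgmono hc hi.1 hi.2 hσi.1 hσi.2 hj.1 hj.2 hσj.1 hσj.2 hcr
  have mi : i ∈ Finset.Icc 1 N := Finset.mem_Icc.mpr hi
  have mj : j ∈ Finset.Icc 1 N := Finset.mem_Icc.mpr hj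
  refine ⟨σ ∘ Equiv.swap i j, hbij.comp (bijOn_swap
    (Set.mem_Icc.mpr hi) (Set.mem_Icc.mpr hj)), ?_, ?_⟩
  · have key : meas N (σ ∘ Equiv.swap i j)
        + (fm N (arclen i (σ i)) + fm N (arclen j (σ j)))
        = meas N σ + (fm N (arclen i (σ j)) + fm N (arclen j (σ i))) := by
      have hk := sum_pair_split (Icc 1 N) hij mi mj
        (fun k => fm N (arclen k (σ k)))
        (fun k => fm N (arclen k (σ (Equiv.swap i j k))))
        (fun k _ hki hkj => by simp [Equiv.swap_apply_of_ne_of_ne hki hkj])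
      unfold meas
      simpa [Function.comp_apply, Equiv.swap_apply_left, Equiv.swap_apply_right] using hk
    have h2' := hsw.2
    omega
  · have key : (∑ k ∈ Icc 1 N, c (p k) (q ((σ ∘ Equiv.swap i j) k)))
        + (c (p i) (q (σ i)) + c (p j) (q (σ j)))
        = (∑ k ∈ Icc 1 N, c (p k) (q (σ k)))
        + (c (p i) (q (σ j)) + c (p j) (q (σ i))) := by
      have hk := sum_pair_split (Icc 1 N) hij mi mj
        (fun k => c (p k) (q (σ k)))
        (fun k => c (p k) (q (σ (Equiv.swap i j k))))
        (fun k _ hki hkj => by simp [Equiv.swap_apply_of_ne_of_ne hki hkj])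
      simpa [Function.comp_apply, Equiv.swap_apply_left, Equiv.swap_apply_right] using hk
    have h1' := hsw.1
    linarith

lemma main_aux {N : ℕ} {p q : ℕ → ℝ} {g : ℝ → ℝ} {c : ℝ → ℝ → ℝ} {Ip Iq : ℕ → ℕ → ℝ}
    (hN : 1 ≤ N)
    (hpq : ∀ i, 1 ≤ i → i ≤ N → p i < q i)
    (hqp : ∀ i, 1 ≤ i → i < N → q i < p (i + 1))
    (hg : ConcaveOn ℝ Set.univ g) (hgmono : MonotoneOn g (Set.Ici 0))
    (hc : ∀ x y, c x y = g |x - y|)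
    (hIp : ∀ k i, Ip k i =
      c (p i) (q (i + k))
      + ∑ ℓ ∈ Finset.range k, c (p (i + ℓ + 1)) (q (i + ℓ))
      - ∑ ℓ ∈ Finset.range (k + 1), c (p (i + ℓ)) (q (i + ℓ)))
    (hIq : ∀ k i, Iq k i =
      c (p (i + k + 1)) (q i)
      + ∑ ℓ ∈ Finset.Icc 1 k, c (p (i + ℓ)) (q (i + ℓ))
      - ∑ ℓ ∈ Finset.range (k + 1), c (p (i + ℓ + 1)) (q (i + ℓ)))
    (h1 : ∀ k i, 1 ≤ k → k ≤ N - 1 → 1 ≤ i → i ≤ N - k → 0 ≤ Ip k i)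
    (h2 : ∀ k i, 1 ≤ k → k ≤ N - 2 → 1 ≤ i → i ≤ N - k - 1 → 0 ≤ Iq k i) :
    ∀ n : ℕ, ∀ σ : ℕ → ℕ, Set.BijOn σ (Set.Icc 1 N) (Set.Icc 1 N) → meas N σ ≤ n →
      ∑ i ∈ Icc 1 N, c (p i) (q i) ≤ ∑ i ∈ Icc 1 N, c (p i) (q (σ i)) := by
  intro n
  induction n with
  | zero =>
    intro σ hbij hm
    by_cases hNC : NCon σ (Finset.Icc 1 N)
    · exact (structural hIp hIq h1 h2 (N+1-1)).1 1 N σ le_rfl le_rfl rfl hbij hNC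
    · obtain ⟨σ', _, hlt, _⟩ := cross_step hpq hqp hg hgmono hc hbij hNC
      omega
  | succ n IHn =>
    intro σ hbij hm
    by_cases hNC : NCon σ (Finset.Icc 1 N)
    · exact (structural hIp hIq h1 h2 (N+1-1)).1 1 N σ le_rfl le_rfl rfl hbij hNC
    · obtain ⟨σ', hbij', hlt, hle⟩ := cross_step hpq hqp hg hgmono hc hbij hNC
      exact le_trans (IHn σ' hbij' (by omega)) hle

theorem stmt_13
    (N : ℕ) (hN : 1 ≤ N)
    (p q : ℕ → ℝ)
    (hpq : ∀ i, 1 ≤ i → i ≤ N → p i < q i)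
    (hqp : ∀ i, 1 ≤ i → i < N → q i < p (i + 1))
    (g : ℝ → ℝ)
    (hg : ConcaveOn ℝ Set.univ g)
    (hgmono : MonotoneOn g (Set.Ici 0))
    (c : ℝ → ℝ → ℝ)
    (hc : ∀ x y, c x y = g |x - y|)
    (C : (ℕ → ℕ) → ℝ)
    (hC : ∀ σ : ℕ → ℕ, C σ = ∑ i ∈ Finset.Icc 1 N, c (p i) (q (σ i)))
    (Ip : ℕ → ℕ → ℝ)
    (hIp : ∀ k i, Ip k i =
      c (p i) (q (i + k))
      + ∑ ℓ ∈ Finset.range k, c (p (i + ℓ + 1)) (q (i + ℓ))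
      - ∑ ℓ ∈ Finset.range (k + 1), c (p (i + ℓ)) (q (i + ℓ)))
    (Iq : ℕ → ℕ → ℝ)
    (hIq : ∀ k i, Iq k i =
      c (p (i + k + 1)) (q i)
      + ∑ ℓ ∈ Finset.Icc 1 k, c (p (i + ℓ)) (q (i + ℓ))
      - ∑ ℓ ∈ Finset.range (k + 1), c (p (i + ℓ + 1)) (q (i + ℓ)))
    (h1 : ∀ k i, 1 ≤ k → k ≤ N - 1 → 1 ≤ i → i ≤ N - k → 0 ≤ Ip k i)
    (h2 : ∀ k i, 1 ≤ k → k ≤ N - 2 → 1 ≤ i → i ≤ N - k - 1 → 0 ≤ Iq k i)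
    : ∀ σ : ℕ → ℕ, Set.BijOn σ (Set.Icc 1 N) (Set.Icc 1 N) →
      C (fun i => i) ≤ C σ := by
  intro σ hbij
  rw [hC, hC]
  exact main_aux hN hpq hqp hg hgmono hc hIp hIq h1 h2 (meas N σ) σ hbij le_rfl
end
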